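/- Every root of the polynomial ψ_s(z) = z^s − 2z^{s−1} − 1 other than its unique root ρ_s ∈ (2,3) lies strictly inside the unit circle in the complex plane. -/

import Mathlib

/-- If `a ≠ 0` is a root of `z^s - 2 z^(s-1) - 1`, then `a⁻¹` satisfies
`u^s = 1 - 2 u`. -/
lemma stmt8_aux_inv {K : Type*} [Field K] {a : K} (ha : a ≠ 0) {s : ℕ} (hs : 1 < s)
    (h : a ^ s - 2 * a ^ (s - 1) - 1 = 0) : (a⁻¹) ^ s = 1 - 2 * a⁻¹ := by
  have hs1 : s - 1 + 1 = s := by omega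
  have e1 : a ^ s * (a⁻¹) ^ s = 1 := by rw [← mul_pow, mul_inv_cancel₀ ha, one_pow]
  have e2 : a ^ s * a⁻¹ = a ^ (s - 1) := by
    have h3 : a ^ s = a ^ (s - 1) * a := by rw [← pow_succ, hs1]
    rw [h3, mul_assoc, mul_inv_cancel₀ ha, mul_one]
  have key : a ^ s * ((a⁻¹) ^ s - (1 - 2 * a⁻¹)) = 0 := by
    calc a ^ s * ((a⁻¹) ^ s - (1 - 2 * a⁻¹))
        = a ^ s * (a⁻¹) ^ s - a ^ s + 2 * (a ^ s * a⁻¹) := by ring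
      _ = 1 - a ^ s + 2 * a ^ (s - 1) := by rw [e1, e2]
      _ = 0 := by linear_combination -h
  have := mul_eq_zero.mp key
  rcases this with h0 | h0
  · exact absurd h0 (pow_ne_zero _ ha)
  · exact sub_eq_zero.mp h0

/-- Every complex root of `ψ_s(z) = z^s - 2z^(s-1) - 1` other than its unique real root
`ρ_s ∈ (2,3)` lies strictly inside the unit circle. -/
theorem stmt8 (s : ℕ) (hs : 1 < s) (ρ : ℝ) (hρ : ρ ∈ Set.Ioo (2 : ℝ) 3)
    (hroot : ρ ^ s - 2 * ρ ^ (s - 1) - 1 = 0)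
    (w : ℂ) (hw : w ^ s - 2 * w ^ (s - 1) - 1 = 0) (hne : w ≠ (ρ : ℂ)) :
    ‖w‖ < 1 := by
  obtain ⟨h2, h3⟩ := hρ
  by_contra hcon
  push_neg at hcon
  have hρ0 : (0:ℝ) < ρ := by linarith
  have hρ0' : ρ ≠ 0 := ne_of_gt hρ0
  have hw0 : w ≠ 0 := by
    intro h
    rw [h, zero_pow (by omega), zero_pow (by omega)] at hw
    norm_num at hw
  set u : ℂ := w⁻¹ with hu_def
  set t : ℝ := ρ⁻¹ with ht_def
  have ht0 : 0 < t := inv_pos.mpr hρ0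
  have ht2 : t < 1/2 := by
    rw [ht_def]
    rw [inv_lt_comm₀ hρ0 (by norm_num)]
    linarith
  have ht1 : t ≠ 1 := by linarith
  -- the inverse equations
  have hts : t ^ s = 1 - 2 * t := stmt8_aux_inv hρ0' hs hroot
  have hus : u ^ s = 1 - 2 * u := stmt8_aux_inv hw0 hs hw
  have hτs : ((t:ℂ)) ^ s = 1 - 2 * (t:ℂ) := by exact_mod_cast hts
  -- u ≠ t
  have hut : u ≠ (t:ℂ) := by
    rw [hu_def, ht_def]
    push_cast
    exact fun h => hne (inv_injective h)
  -- the cofactor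
  set q : ℂ := ∑ k ∈ Finset.range s, u ^ k * (t:ℂ) ^ (s - 1 - k) with hq_def
  have hq : q * (u - (t:ℂ)) = u ^ s - (t:ℂ) ^ s := geom_sum₂_mul u (t:ℂ) s
  have hqval : q = -2 := by
    have h1 : (q + 2) * (u - (t:ℂ)) = 0 := by
      rw [add_mul, hq, hus, hτs]
      ring
    rcases mul_eq_zero.mp h1 with h0 | h0
    · linear_combination h0
    · exact absurd (sub_eq_zero.mp h0) hut
  -- |u| ≤ 1
  have hu1 : ‖u‖ ≤ 1 := by
    rw [hu_def, norm_inv]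
    exact inv_le_one_of_one_le₀ hcon
  -- the contradiction
  have habs : (2:ℝ) = ‖q‖ := by rw [hqval]; simp
  have hchain : ‖q‖ < 2 := by
    calc ‖q‖ ≤ ∑ k ∈ Finset.range s, ‖u ^ k * (t:ℂ) ^ (s - 1 - k)‖ :=
          norm_sum_le _ _
      _ = ∑ k ∈ Finset.range s, ‖u‖ ^ k * t ^ (s - 1 - k) := by
          refine Finset.sum_congr rfl fun k _ => ?_
          rw [norm_mul, norm_pow, norm_pow, Complex.norm_real, Real.norm_of_nonneg ht0.le]
      _ ≤ ∑ k ∈ Finset.range s, t ^ (s - 1 - k) := by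
          refine Finset.sum_le_sum fun k _ => ?_
          have h1 : ‖u‖ ^ k ≤ 1 :=
            pow_le_one₀ (norm_nonneg _) hu1
          have h2 : (0:ℝ) ≤ t ^ (s - 1 - k) := le_of_lt (pow_pos ht0 _)
          nlinarith
      _ = ∑ j ∈ Finset.range s, t ^ j := Finset.sum_range_reflect (fun j => t ^ j) s
      _ = (t ^ s - 1) / (t - 1) := geom_sum_eq ht1 s
      _ < 2 := by
          rw [div_lt_iff_of_neg (by linarith)]
          rw [hts]
          ring_nf
          linarith
  linarith [habs, hchain]
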